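/- Let ρ be a positive semidefinite N×N matrix of rank R with eigenvalue decomposition ρ = Φ M Φ† where Φ is unitary and M is a diagonal matrix of eigenvalues. Then for an N×K matrix Ψ and a K×K nonnegative diagonal matrix W, we have ρ = Ψ W Ψ† if and only if there exists an R×K matrix T with T T† = I_R such that Ψ W^{1/2} = Φ M^{1/2} T (where we restrict M, Φ to the R nonzero eigenvalues and corresponding eigenvectors). -/
import Mathlib


open Matrix ComplexOrder

/-- Hughston–Jozsa–Wootters lemma: all realisations `ρ = Ψ W Ψ†` of a positive
semidefinite matrix `ρ` with eigenvalue decomposition `ρ = Φ M Φ†` (restricted to the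
`R` nonzero eigenvalues) come from right-unitary matrices `T`. -/
theorem hjw_realisation {N R K : ℕ}
    (ρ : Matrix (Fin N) (Fin N) ℂ) (hρ : ρ.PosSemidef) (hrank : ρ.rank = R)
    (Φ : Matrix (Fin N) (Fin R) ℂ) (m : Fin R → ℝ)
    (hΦ : Φᴴ * Φ = 1) (hm : ∀ i, 0 < m i)
    (hdecomp : ρ = Φ * Matrix.diagonal (fun i => (m i : ℂ)) * Φᴴ)
    (Ψ : Matrix (Fin N) (Fin K) ℂ) (w : Fin K → ℝ) (hw : ∀ k, 0 ≤ w k) :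
    ρ = Ψ * Matrix.diagonal (fun k => (w k : ℂ)) * Ψᴴ ↔
      ∃ T : Matrix (Fin R) (Fin K) ℂ, T * Tᴴ = 1 ∧
        Ψ * Matrix.diagonal (fun k => (Real.sqrt (w k) : ℂ)) =
          Φ * Matrix.diagonal (fun i => (Real.sqrt (m i) : ℂ)) * T := by
  set D : Matrix (Fin R) (Fin R) ℂ := Matrix.diagonal (fun i => (Real.sqrt (m i) : ℂ)) with hDdef
  set E : Matrix (Fin R) (Fin R) ℂ := Matrix.diagonal (fun i => ((Real.sqrt (m i) : ℂ))⁻¹) with hEdef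
  set G : Matrix (Fin K) (Fin K) ℂ := Matrix.diagonal (fun k => (Real.sqrt (w k) : ℂ)) with hGdef
  have hne : ∀ i, (Real.sqrt (m i) : ℂ) ≠ 0 := fun i => by
    simp [Complex.ofReal_ne_zero, Real.sqrt_ne_zero', hm i]
  have hDE : D * E = 1 := by
    rw [hDdef, hEdef, diagonal_mul_diagonal, ← diagonal_one]
    exact congrArg Matrix.diagonal (funext fun i => mul_inv_cancel₀ (hne i))
  have hED : E * D = 1 := by
    rw [hDdef, hEdef, diagonal_mul_diagonal, ← diagonal_one]
    exact congrArg Matrix.diagonal (funext fun i => inv_mul_cancel₀ (hne i))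
  have hDH : Dᴴ = D := by
    rw [hDdef, diagonal_conjTranspose]
    exact congrArg Matrix.diagonal (funext fun i => by
      simp [Complex.star_def, Complex.conj_ofReal])
  have hEH : Eᴴ = E := by
    rw [hEdef, diagonal_conjTranspose]
    exact congrArg Matrix.diagonal (funext fun i => by
      simp [Complex.star_def, map_inv₀, Complex.conj_ofReal])
  have hGH : Gᴴ = G := by
    rw [hGdef, diagonal_conjTranspose]
    exact congrArg Matrix.diagonal (funext fun i => by
      simp [Complex.star_def, Complex.conj_ofReal])
  have hDD : D * D = Matrix.diagonal (fun i => (m i : ℂ)) := by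
    rw [hDdef, diagonal_mul_diagonal]
    exact congrArg Matrix.diagonal (funext fun i => by
      rw [← Complex.ofReal_mul, Real.mul_self_sqrt (hm i).le])
  have hGG : G * G = Matrix.diagonal (fun k => (w k : ℂ)) := by
    rw [hGdef, diagonal_mul_diagonal]
    exact congrArg Matrix.diagonal (funext fun k => by
      rw [← Complex.ofReal_mul, Real.mul_self_sqrt (hw k)])
  set A : Matrix (Fin N) (Fin K) ℂ := Ψ * G with hAdef
  set B : Matrix (Fin N) (Fin R) ℂ := Φ * D with hBdef
  have hBB : B * Bᴴ = ρ := by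
    rw [hBdef, conjTranspose_mul, hDH, hdecomp, Matrix.mul_assoc, Matrix.mul_assoc,
      ← Matrix.mul_assoc D D Φᴴ, hDD]
  have hΨW : Ψ * Matrix.diagonal (fun k => (w k : ℂ)) * Ψᴴ = A * Aᴴ := by
    rw [hAdef, conjTranspose_mul, hGH, Matrix.mul_assoc, Matrix.mul_assoc,
      ← Matrix.mul_assoc G G Ψᴴ, hGG]
  constructor
  · intro h
    have hAA : A * Aᴴ = ρ := by rw [← hΨW, ← h]
    have hPρ : Φ * (Φᴴ * ρ) = ρ := by
      rw [hdecomp, Matrix.mul_assoc Φ _ Φᴴ, ← Matrix.mul_assoc Φᴴ Φ _, hΦ, Matrix.one_mul,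
        ← Matrix.mul_assoc]
    have hρP : ρ * Φ * Φᴴ = ρ := by
      have h2 := congrArg conjTranspose hPρ
      simpa [conjTranspose_mul, hρ.1.eq, Matrix.mul_assoc] using h2
    set Q : Matrix (Fin N) (Fin K) ℂ := Φ * (Φᴴ * A) with hQdef
    have hQH : Qᴴ = Aᴴ * Φ * Φᴴ := by
      rw [hQdef, conjTranspose_mul, conjTranspose_mul, conjTranspose_conjTranspose,
        Matrix.mul_assoc]
    have t1 : A * Qᴴ = ρ := by
      rw [hQH, ← Matrix.mul_assoc, ← Matrix.mul_assoc, hAA, hρP]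
    have t2 : Q * Aᴴ = ρ := by
      rw [hQdef, Matrix.mul_assoc Φ (Φᴴ * A) Aᴴ, Matrix.mul_assoc Φᴴ A Aᴴ, hAA, hPρ]
    have t3 : Q * Qᴴ = ρ := by
      rw [hQdef, Matrix.mul_assoc Φ (Φᴴ * A) Qᴴ, Matrix.mul_assoc Φᴴ A Qᴴ, t1, hPρ]
    have key : Q = A := by
      have h0 : (A - Q) * (A - Q)ᴴ = 0 := by
        rw [conjTranspose_sub, Matrix.sub_mul, Matrix.mul_sub, Matrix.mul_sub,
          hAA, t1, t2, t3]
        simp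
      have := Matrix.self_mul_conjTranspose_eq_zero.mp h0
      have := sub_eq_zero.mp this
      exact this.symm
    refine ⟨E * (Φᴴ * A), ?_, ?_⟩
    · have hΦρΦ : Φᴴ * (ρ * Φ) = D * D := by
        rw [hdecomp, hDD]
        rw [Matrix.mul_assoc _ Φᴴ Φ, hΦ, Matrix.mul_one, ← Matrix.mul_assoc, hΦ,
          Matrix.one_mul]
      rw [conjTranspose_mul, conjTranspose_mul, conjTranspose_conjTranspose, hEH]
      calc E * (Φᴴ * A) * (Aᴴ * Φ * E)
          = E * (Φᴴ * (A * Aᴴ * Φ)) * E := by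
            simp only [Matrix.mul_assoc]
        _ = E * (D * D) * E := by rw [hAA, hΦρΦ]
        _ = 1 := by rw [← Matrix.mul_assoc, hED, Matrix.one_mul, hDE]
    · show A = Φ * D * (E * (Φᴴ * A))
      rw [Matrix.mul_assoc Φ D _, ← Matrix.mul_assoc D E _, hDE, Matrix.one_mul]
      exact key.symm
  · rintro ⟨T, hT, hA⟩
    have hAeq : A = B * T := by rw [hA, hBdef]
    rw [hΨW, hAeq, conjTranspose_mul, ← Matrix.mul_assoc, Matrix.mul_assoc B T Tᴴ, hT,
      Matrix.mul_one, hBB]
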